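/- Over a field F of characteristic two, if A is a symmetric n×n matrix with zero diagonal (an adjacency-type matrix of indeterminates of a simple graph), then det A = ∑_{σ} ∏_i A(i,σ(i)) where the sum ranges only over permutations σ that are fixed-point-free involutions, i.e., det A equals the sum over perfect-matching permutations; all other nonzero terms cancel in pairs. -/

import Mathlib

open scoped Classical

/-- Over a commutative ring of characteristic two, the determinant of a symmetric matrix
with zero diagonal equals the sum of the diagonal products over the fixed-point-free
involutions (i.e. the perfect-matching permutations); all other terms cancel in pairs. -/
theorem det_symm_zero_diag_eq_sum_matchings {R : Type*} [CommRing R] [CharP R 2] {n : ℕ}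
    (A : Matrix (Fin n) (Fin n) R) (hsym : A.IsSymm) (hdiag : ∀ i, A i i = 0) :
    A.det = ∑ σ ∈ Finset.univ.filter
        (fun σ : Equiv.Perm (Fin n) => σ * σ = 1 ∧ ∀ i, σ i ≠ i),
      ∏ i : Fin n, A i (σ i) := by
  have hsym' : ∀ i j, A i j = A j i := fun i j => hsym.apply j i
  set f : Equiv.Perm (Fin n) → R := fun σ => ∏ i : Fin n, A i (σ i) with hf
  have hinv : ∀ σ : Equiv.Perm (Fin n), f σ⁻¹ = f σ := by
    intro σ
    calc f σ⁻¹ = ∏ i, A (σ i) (σ⁻¹ (σ i)) :=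
          (Equiv.prod_comp σ (fun i => A i (σ⁻¹ i))).symm
      _ = ∏ i, A i (σ i) := by
          refine Finset.prod_congr rfl fun i _ => ?_
          rw [show σ⁻¹ (σ i) = i from σ.symm_apply_apply i, hsym']
  have hdet : A.det = ∑ σ : Equiv.Perm (Fin n), f σ := by
    rw [Matrix.det_apply]
    refine Finset.sum_congr rfl fun σ _ => ?_
    have hone : ((Equiv.Perm.sign σ : ℤ) : R) = 1 := by
      rcases Int.units_eq_one_or (Equiv.Perm.sign σ) with h | h <;> rw [h] <;>
        simp [CharTwo.neg_eq]
    rw [Units.smul_def, zsmul_eq_mul, hone, one_mul]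
    calc (∏ i, A (σ i) i) = ∏ i, A (σ i) (σ⁻¹ (σ i)) := by
          refine Finset.prod_congr rfl fun i _ => ?_
          rw [show σ⁻¹ (σ i) = i from σ.symm_apply_apply i]
      _ = ∏ i, A i (σ⁻¹ i) := Equiv.prod_comp σ (fun i => A i (σ⁻¹ i))
      _ = f σ := hinv σ
  rw [hdet]
  set P : Equiv.Perm (Fin n) → Prop := fun σ => σ * σ = 1 ∧ ∀ i, σ i ≠ i with hP
  rw [← Finset.sum_filter_add_sum_filter_not Finset.univ P f]
  have hrest : ∑ σ ∈ Finset.univ.filter (fun σ => ¬ P σ), f σ = 0 := by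
    rw [← Finset.sum_filter_add_sum_filter_not _ (fun σ => ∃ i, σ i = i)]
    have h1 : ∑ σ ∈ (Finset.univ.filter (fun σ => ¬ P σ)).filter
        (fun σ => ∃ i, σ i = i), f σ = 0 := by
      refine Finset.sum_eq_zero fun σ hσ => ?_
      simp only [Finset.mem_filter] at hσ
      obtain ⟨i, hi⟩ := hσ.2
      exact Finset.prod_eq_zero (Finset.mem_univ i) (by rw [hi, hdiag])
    have h2 : ∑ σ ∈ (Finset.univ.filter (fun σ => ¬ P σ)).filter
        (fun σ => ¬ ∃ i, σ i = i), f σ = 0 := by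
      refine Finset.sum_involution (fun σ _ => σ⁻¹) ?_ ?_ ?_ ?_
      · intro σ _
        rw [hinv σ, CharTwo.add_self_eq_zero]
      · intro σ hσ _
        simp only [Finset.mem_filter, hP, not_and, not_exists] at hσ
        intro h
        have h' : σ⁻¹ = σ := h
        have hft : ∀ i, σ i ≠ i := fun i => hσ.2 i
        have hsq : σ * σ = 1 := by
          refine Equiv.ext fun i => ?_
          have : σ (σ i) = i :=
            calc σ (σ i) = σ⁻¹ (σ i) := by rw [h']
              _ = i := σ.symm_apply_apply i
          simpa [Equiv.Perm.mul_apply] using this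
        exact (hσ.1.2 hsq hft).elim
      · intro σ hσ
        simp only [Finset.mem_filter, hP, not_and, not_exists] at hσ ⊢
        refine ⟨⟨Finset.mem_univ _, ?_⟩, ?_⟩
        · intro hsq hft
          refine hσ.1.2 ?_ (fun i => hσ.2 i)
          calc σ * σ = (σ⁻¹ * σ⁻¹)⁻¹ := by rw [mul_inv_rev, inv_inv]
            _ = 1 := by rw [hsq, inv_one]
        · intro i h
          have := hσ.2 (σ⁻¹ i)
          apply this
          conv_lhs => rw [← h]
          exact σ.apply_symm_apply (σ⁻¹ i)
      · intro σ _
        exact inv_inv σ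
    rw [h1, h2, add_zero]
  rw [hrest, add_zero]
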